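/- For all real t ≥ 1 and all v with 0 ≤ v ≤ 1, ((1-v) + v·t)/t^v ≤ exp(v·(1-v)·(t-1)²/2). -/

import Mathlib

open Real

theorem stmt5 (t v : ℝ) (ht : 1 ≤ t) (hv0 : 0 ≤ v) (hv1 : v ≤ 1) :
    ((1 - v) + v * t) / t ^ v ≤ Real.exp (v * (1 - v) * (t - 1) ^ 2 / 2) := by
  have ht0 : (0:ℝ) < t := lt_of_lt_of_le one_pos ht
  have hpos : ∀ s : ℝ, 1 ≤ s → 0 < 1 - v + v * s := by
    intro s hs; nlinarith
  set F : ℝ → ℝ := fun s =>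
    v * (1 - v) * (s - 1) ^ 2 / 2 + v * Real.log s - Real.log (1 - v + v * s) with hF
  have hderiv : ∀ s : ℝ, 1 ≤ s → HasDerivAt F
      (v * (1 - v) * (s - 1) - (v * (1 - v) * (s - 1)) / (s * (1 - v + v * s))) s := by
    intro s hs
    have hs0 : (0:ℝ) < s := lt_of_lt_of_le one_pos hs
    have h1 : HasDerivAt (fun s : ℝ => v * (1 - v) * (s - 1) ^ 2 / 2)
        (v * (1 - v) * (s - 1)) s := by
      have h : HasDerivAt (fun s : ℝ => (s - 1)) 1 s := (hasDerivAt_id s).sub_const 1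
      have h2 := ((h.pow 2).const_mul (v * (1 - v))).div_const 2
      refine h2.congr_deriv ?_; norm_num; ring
    have h2 : HasDerivAt (fun s : ℝ => v * Real.log s) (v / s) s := by
      have h := (Real.hasDerivAt_log (ne_of_gt hs0)).const_mul v
      refine h.congr_deriv ?_; ring
    have h3 : HasDerivAt (fun s : ℝ => Real.log (1 - v + v * s)) (v / (1 - v + v * s)) s := by
      have hi : HasDerivAt (fun s : ℝ => 1 - v + v * s) v s := by
        simpa using ((hasDerivAt_id s).const_mul v).const_add (1 - v)
      have h := (Real.hasDerivAt_log (ne_of_gt (hpos s hs))).comp s hi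
      refine h.congr_deriv ?_; field_simp
    have h := (h1.add h2).sub h3
    refine h.congr_deriv ?_
    have hq := hpos s hs
    field_simp
    ring
  have hmono : MonotoneOn F (Set.Ici 1) := by
    apply monotoneOn_of_deriv_nonneg (convex_Ici 1)
    · intro s hs
      exact ((hderiv s hs).continuousAt).continuousWithinAt
    · intro s hs
      rw [interior_Ici] at hs
      exact (hderiv s hs.le).differentiableAt.differentiableWithinAt
    · intro s hs
      rw [interior_Ici] at hs
      have hs1 : 1 < s := hs
      rw [(hderiv s hs.le).deriv]
      have hq := hpos s hs.le
      have hD : 1 ≤ s * (1 - v + v * s) := by nlinarith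
      have hA : 0 ≤ v * (1 - v) * (s - 1) :=
        mul_nonneg (mul_nonneg hv0 (by linarith)) (by linarith)
      have hle : (v * (1 - v) * (s - 1)) / (s * (1 - v + v * s)) ≤ v * (1 - v) * (s - 1) :=
        div_le_self hA hD
      linarith
  have hF1 : F 1 = 0 := by simp [hF]
  have hFt : (0:ℝ) ≤ F t := by
    have h := hmono (Set.mem_Ici.mpr le_rfl) (Set.mem_Ici.mpr ht) ht
    rwa [hF1] at h
  have hlog : Real.log (1 - v + v * t) ≤ v * (1 - v) * (t - 1) ^ 2 / 2 + v * Real.log t := by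
    simp only [hF] at hFt; linarith
  have ht0' : (0:ℝ) < 1 - v + v * t := hpos t ht
  have hrw : ((1 - v) + v * t) / t ^ v
      = Real.exp (Real.log (1 - v + v * t) - v * Real.log t) := by
    rw [Real.exp_sub, Real.exp_log ht0', Real.rpow_def_of_pos ht0, mul_comm v (Real.log t)]
  rw [hrw]
  exact Real.exp_le_exp.mpr (by linarith)
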